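/- Let n = 2^k for a positive integer k. Then the total chromatic number of the unitary Cayley graph U_n equals φ(2^k) + 2 = 2^{k-1} + 2. -/

import Mathlib

/-- A total coloring of a simple graph `G` with colors in `Fin k`: adjacent vertices get
distinct colors, edges sharing an endpoint get distinct colors, and each edge gets a color
distinct from the colors of both its endpoints. -/
def IsTotalColoring {V : Type*} (G : SimpleGraph V) {k : ℕ}
    (cV : V → Fin k) (cE : G.edgeSet → Fin k) : Prop :=
  (∀ u v : V, G.Adj u v → cV u ≠ cV v) ∧
  (∀ e f : G.edgeSet, e ≠ f → (∃ x, x ∈ (e : Sym2 V) ∧ x ∈ (f : Sym2 V)) → cE e ≠ cE f) ∧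
  (∀ (e : G.edgeSet) (v : V), v ∈ (e : Sym2 V) → cE e ≠ cV v)

/-- The total chromatic number: the least `k` admitting a total coloring with `k` colors. -/
noncomputable def totalChromaticNumber {V : Type*} (G : SimpleGraph V) : ℕ :=
  sInf {k | ∃ (cV : V → Fin k) (cE : G.edgeSet → Fin k), IsTotalColoring G cV cE}

/-- The unitary Cayley graph `U n` on `ZMod n`: `u` and `v` are adjacent iff `u ≠ v` and
`u - v` is a unit of `ZMod n` (equivalently, `gcd(u - v, n) = 1`). -/
def unitaryCayleyGraph (n : ℕ) : SimpleGraph (ZMod n) :=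
  SimpleGraph.fromRel (fun u v => IsUnit (u - v))


namespace UCGaux
variable {k : ℕ}

local notation "n" => 2 ^ (k + 1)
local notation "m" => 2 ^ k

instance : NeZero (2 ^ (k + 1)) := ⟨(pow_pos two_pos (k+1)).ne'⟩

/-- parity homomorphism -/
noncomputable def par (k : ℕ) : ZMod (2 ^ (k + 1)) →+* ZMod 2 :=
  ZMod.castHom (dvd_pow_self 2 (Nat.succ_ne_zero k)) (ZMod 2)

lemma zmod2_cases : ∀ y : ZMod 2, y = 0 ∨ y = 1 := by decide

lemma par_eq_zero_iff (x : ZMod n) : par k x = 0 ↔ x.val % 2 = 0 := by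
  have h : par k x = ((x.val : ℕ) : ZMod 2) := by
    simp [par, ZMod.castHom_apply, ZMod.natCast_val]
  rw [h, ZMod.natCast_eq_zero_iff]
  omega

lemma par_eq_one_iff (x : ZMod n) : par k x = 1 ↔ x.val % 2 = 1 := by
  rcases zmod2_cases (par k x) with h | h <;> rw [h]
  · rw [par_eq_zero_iff] at h
    constructor
    · intro h1; exact absurd h1.symm (by decide)
    · omega
  · have h0 : ¬ (par k x = 0) := by rw [h]; decide
    rw [par_eq_zero_iff] at h0
    constructor
    · intro _; omega
    · intro _; rfl

lemma isUnit_iff_par (x : ZMod n) : IsUnit x ↔ par k x = 1 := by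
  have hx : ((x.val : ℕ) : ZMod n) = x := ZMod.natCast_rightInverse x
  rw [par_eq_one_iff, ← hx, ZMod.isUnit_iff_coprime,
    Nat.coprime_pow_right_iff (Nat.succ_pos k), Nat.coprime_two_right, Nat.odd_iff]
  simp [ZMod.val_natCast, Nat.mod_mod_of_dvd _ (dvd_pow_self 2 (Nat.succ_ne_zero k))]

lemma adj_iff (u v : ZMod n) :
    (unitaryCayleyGraph n).Adj u v ↔ par k u ≠ par k v := by
  rw [unitaryCayleyGraph, SimpleGraph.fromRel_adj]
  constructor
  · rintro ⟨hne, h | h⟩ <;> rw [isUnit_iff_par] at h <;> intro he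
    · rw [map_sub, he, sub_self] at h; exact one_ne_zero h.symm
    · rw [map_sub, he, sub_self] at h; exact one_ne_zero h.symm
  · intro h
    refine ⟨fun he => h (by rw [he]), Or.inl ?_⟩
    rw [isUnit_iff_par, map_sub]
    rcases zmod2_cases (par k u) with h1 | h1 <;> rcases zmod2_cases (par k v) with h2 | h2 <;>
      simp_all

lemma card_par_fiber (c : ZMod 2) :
    (Finset.univ.filter fun x : ZMod n => par k x = c).card = m := by
  have key : ∀ c : ZMod 2,
      (Finset.univ.filter fun x : ZMod n => par k x = c).card
      = (Finset.univ.filter fun x : ZMod n => par k x = c + 1).card := by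
    intro c
    refine Finset.card_bij' (fun x _ => x + 1) (fun y _ => y - 1) ?_ ?_ ?_ ?_
    · intro a ha
      simp only [Finset.mem_filter, Finset.mem_univ, true_and] at ha ⊢
      rw [map_add, ha, map_one]
    · intro a ha
      simp only [Finset.mem_filter, Finset.mem_univ, true_and] at ha ⊢
      rw [map_sub, ha, map_one, add_sub_cancel_right]
    · intro a _; ring
    · intro a _; ring
  have hnegeq : (Finset.univ.filter fun x : ZMod n => ¬ par k x = 0)
      = (Finset.univ.filter fun x : ZMod n => par k x = 1) := by
    apply Finset.filter_congr
    intro x _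
    rcases zmod2_cases (par k x) with h | h <;> simp [h]
  have hsplit := Finset.card_filter_add_card_filter_not
    (s := Finset.univ) (p := fun x : ZMod n => par k x = 0)
  rw [hnegeq, Finset.card_univ, ZMod.card] at hsplit
  have h01 : (Finset.univ.filter fun x : ZMod n => par k x = 0).card
      = (Finset.univ.filter fun x : ZMod n => par k x = 1).card := by
    simpa using key 0
  have hpow : (2:ℕ) ^ (k+1) = 2 * 2 ^ k := by ring
  rcases zmod2_cases c with h | h <;> subst h <;> omega


lemma zmod2_ne_iff : ∀ a b : ZMod 2, a ≠ b ↔ b = a + 1 := by decide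

lemma edge_spec (e : (unitaryCayleyGraph n).edgeSet) {x : ZMod n}
    (hx : x ∈ (e : Sym2 (ZMod n))) :
    (unitaryCayleyGraph n).Adj x (Sym2.Mem.other hx) ∧
      (e : Sym2 (ZMod n)) = s(x, Sym2.Mem.other hx) := by
  have hs := Sym2.other_spec hx
  refine ⟨?_, hs.symm⟩
  have he := e.2
  rw [← hs] at he
  exact (SimpleGraph.mem_edgeSet _).1 he

/-- the sum of the two endpoints of an unordered pair -/
noncomputable def esum : Sym2 (ZMod n) → ZMod n :=
  Sym2.lift ⟨fun u v => u + v, fun u v => add_comm u v⟩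

lemma esum_mk (u v : ZMod n) : esum s(u, v) = u + v := rfl

lemma par_esum (e : (unitaryCayleyGraph n).edgeSet) : par k (esum (e : Sym2 (ZMod n))) = 1 := by
  have hx := Sym2.out_fst_mem (e : Sym2 (ZMod n))
  set x := (e : Sym2 (ZMod n)).out.1 with hxdef
  obtain ⟨hadj, hs⟩ := edge_spec e hx
  rw [hs, esum_mk, map_add]
  rw [adj_iff] at hadj
  rcases zmod2_cases (par k x) with h1 | h1 <;>
    rcases zmod2_cases (par k (Sym2.Mem.other hx)) with h2 | h2 <;>
      rw [h1, h2]
  · exact absurd (h1.trans h2.symm) hadj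
  · decide
  · decide
  · exact absurd (h1.trans h2.symm) hadj

lemma exists_coloring :
    ∃ (cV : ZMod n → Fin (m + 2))
      (cE : (unitaryCayleyGraph n).edgeSet → Fin (m + 2)),
      IsTotalColoring (unitaryCayleyGraph n) cV cE := by
  have hpow : (2:ℕ) ^ (k+1) = 2 * 2 ^ k := by ring
  refine ⟨fun x => if par k x = 0 then ⟨m, by omega⟩ else ⟨m+1, by omega⟩,
    fun e => ⟨(esum (e : Sym2 (ZMod n))).val / 2, ?_⟩, ?_, ?_, ?_⟩
  · have := ZMod.val_lt (esum (e : Sym2 (ZMod n)))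
    omega
  · intro u v hadj
    rw [adj_iff] at hadj
    rcases zmod2_cases (par k u) with h1 | h1 <;>
      rcases zmod2_cases (par k v) with h2 | h2 <;>
        simp_all [Fin.ext_iff]
  · rintro e f hef ⟨x, hxe, hxf⟩
    obtain ⟨hadje, hse⟩ := edge_spec e hxe
    obtain ⟨hadjf, hsf⟩ := edge_spec f hxf
    intro hc
    apply hef
    have hc' : (esum (e : Sym2 (ZMod n))).val / 2 = (esum (f : Sym2 (ZMod n))).val / 2 :=
      congrArg Fin.val hc
    have hpe : (esum (e : Sym2 (ZMod n))).val % 2 = 1 := (par_eq_one_iff _).1 (par_esum e)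
    have hpf : (esum (f : Sym2 (ZMod n))).val % 2 = 1 := (par_eq_one_iff _).1 (par_esum f)
    have hval : (esum (e : Sym2 (ZMod n))).val = (esum (f : Sym2 (ZMod n))).val := by omega
    have heq : esum (e : Sym2 (ZMod n)) = esum (f : Sym2 (ZMod n)) :=
      ZMod.val_injective _ hval
    rw [hse, hsf, esum_mk, esum_mk] at heq
    have : Sym2.Mem.other hxe = Sym2.Mem.other hxf := by
      exact add_left_cancel heq
    apply Subtype.ext
    rw [hse, hsf, this]
  · intro e v hv
    have hlt : (esum (e : Sym2 (ZMod n))).val / 2 < m := by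
      have := ZMod.val_lt (esum (e : Sym2 (ZMod n)))
      omega
    rcases zmod2_cases (par k v) with h1 | h1 <;>
      simp_all [Fin.ext_iff] <;> omega


lemma zmod2_ne_add_one : ∀ a : ZMod 2, a ≠ a + 1 := by decide

section Lower
variable {N : ℕ}

open Classical in
noncomputable def fv (cV : ZMod n → Fin N) (cE : (unitaryCayleyGraph n).edgeSet → Fin N)
    (v w : ZMod n) : Fin N :=
  if h : (unitaryCayleyGraph n).Adj v w then
    cE ⟨s(v, w), (SimpleGraph.mem_edgeSet _).2 h⟩ else cV v

lemma adj_of_par {v w : ZMod n} (hw : par k w = par k v + 1) :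
    (unitaryCayleyGraph n).Adj v w := by
  rw [adj_iff, hw]
  exact zmod2_ne_add_one _

lemma fv_eq (cV : ZMod n → Fin N) (cE : (unitaryCayleyGraph n).edgeSet → Fin N) {v w : ZMod n} (hadj : (unitaryCayleyGraph n).Adj v w) :
    fv cV cE v w = cE ⟨s(v, w), (SimpleGraph.mem_edgeSet _).2 hadj⟩ := dif_pos hadj

lemma cols_card (cV : ZMod n → Fin N) (cE : (unitaryCayleyGraph n).edgeSet → Fin N) (h : IsTotalColoring (unitaryCayleyGraph n) cV cE) (v : ZMod n) :
    (insert (cV v) ((Finset.univ.filter fun w : ZMod n => par k w = par k v + 1).image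
      (fv cV cE v))).card = m + 1 := by
  obtain ⟨h1, h2, h3⟩ := h
  have hinj : Set.InjOn (fv cV cE v)
      (Finset.univ.filter fun w : ZMod n => par k w = par k v + 1) := by
    intro w hw w' hw' heq
    simp only [Finset.coe_filter, Set.mem_setOf_eq] at hw hw'
    have hadj : (unitaryCayleyGraph n).Adj v w := adj_of_par hw.2
    have hadj' : (unitaryCayleyGraph n).Adj v w' := adj_of_par hw'.2
    rw [fv_eq cV cE hadj, fv_eq cV cE hadj'] at heq
    by_contra hne
    have hedges : (⟨s(v, w), (SimpleGraph.mem_edgeSet _).2 hadj⟩ :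
        (unitaryCayleyGraph n).edgeSet) ≠ ⟨s(v, w'), (SimpleGraph.mem_edgeSet _).2 hadj'⟩ := by
      intro hcon
      exact hne (Sym2.congr_right.1 (Subtype.ext_iff.1 hcon))
    exact h2 _ _ hedges ⟨v, Sym2.mem_mk_left _ _, Sym2.mem_mk_left _ _⟩ heq
  have hnotmem : cV v ∉ (Finset.univ.filter fun w : ZMod n => par k w = par k v + 1).image
      (fv cV cE v) := by
    intro hmem
    obtain ⟨w, hw, hfw⟩ := Finset.mem_image.1 hmem
    have hadj : (unitaryCayleyGraph n).Adj v w := adj_of_par (Finset.mem_filter.1 hw).2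
    rw [fv_eq cV cE hadj] at hfw
    exact h3 _ v (Sym2.mem_mk_left _ _) hfw
  rw [Finset.card_insert_of_notMem hnotmem, Finset.card_image_of_injOn hinj,
    card_par_fiber (par k v + 1)]

lemma lower_bound (cV : ZMod n → Fin N) (cE : (unitaryCayleyGraph n).edgeSet → Fin N) (h : IsTotalColoring (unitaryCayleyGraph n) cV cE) : m + 2 ≤ N := by
  classical
  by_contra hN
  push_neg at hN
  have hle : m + 1 ≤ N := by
    have h0 := cols_card cV cE h 0
    calc m + 1 = _ := h0.symm
    _ ≤ Finset.univ.card := Finset.card_le_univ _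
    _ = N := by simp
  have hNe : N = m + 1 := by omega
  have hcolsuniv : ∀ v : ZMod n,
      (insert (cV v) ((Finset.univ.filter fun w : ZMod n => par k w = par k v + 1).image
        (fv cV cE v))) = Finset.univ := by
    intro v
    apply Finset.eq_univ_of_card
    rw [cols_card cV cE h v]
    simp [hNe]
  obtain ⟨h1, h2, h3⟩ := h
  have hmain : ∀ b : ZMod n, par k b = 1 →
      ∃ w, (unitaryCayleyGraph n).Adj b w ∧ fv cV cE b w = cV 0 := by
    intro b hb
    have hadj0 : (unitaryCayleyGraph n).Adj 0 b := by
      rw [adj_iff, map_zero, hb]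
      exact zero_ne_one
    have hmem : cV 0 ∈ insert (cV b)
        ((Finset.univ.filter fun w : ZMod n => par k w = par k b + 1).image (fv cV cE b)) := by
      rw [hcolsuniv b]; exact Finset.mem_univ _
    rcases Finset.mem_insert.1 hmem with hcase | hcase
    · exact absurd hcase (h1 0 b hadj0)
    · obtain ⟨w, hw, hfw⟩ := Finset.mem_image.1 hcase
      exact ⟨w, adj_of_par (Finset.mem_filter.1 hw).2, hfw⟩
  choose g hg1 hg2 using hmain
  let f : ZMod n → ZMod n := fun b => if hb : par k b = 1 then g b hb else 0
  have hcard := Finset.card_le_card_of_injOn f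
    (s := Finset.univ.filter fun x : ZMod n => par k x = 1)
    (t := (Finset.univ.filter fun x : ZMod n => par k x = 0).erase 0) ?_ ?_
  · have hB : (Finset.univ.filter fun x : ZMod n => par k x = 1).card = m := card_par_fiber 1
    have h0mem : (0 : ZMod n) ∈ Finset.univ.filter fun x : ZMod n => par k x = 0 := by
      simp [map_zero]
    have hA : ((Finset.univ.filter fun x : ZMod n => par k x = 0).erase 0).card
        = (Finset.univ.filter fun x : ZMod n => par k x = 0).card - 1 :=
      Finset.card_erase_of_mem h0mem
    rw [hB, hA, card_par_fiber (0 : ZMod 2)] at hcard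
    have : (1:ℕ) ≤ 2 ^ k := Nat.one_le_two_pow
    omega
  · intro b hb
    have hb1 : par k b = 1 := (Finset.mem_filter.1 hb).2
    have hfb : f b = g b hb1 := dif_pos hb1
    have hadj := hg1 b hb1
    have hcol := hg2 b hb1
    rw [fv_eq cV cE hadj] at hcol
    rw [hfb]
    refine Finset.mem_erase.2 ⟨?_, ?_⟩
    · intro h0
      apply h3 ⟨s(b, g b hb1), (SimpleGraph.mem_edgeSet _).2 hadj⟩ 0 ?_ (by rw [hcol])
      show (0 : ZMod n) ∈ s(b, g b hb1)
      rw [h0]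
      exact Sym2.mem_mk_right _ _
    · refine Finset.mem_filter.2 ⟨Finset.mem_univ _, ?_⟩
      have := (adj_iff b (g b hb1)).1 hadj
      rw [hb1] at this
      rcases zmod2_cases (par k (g b hb1)) with hh | hh
      · exact hh
      · exact absurd hh.symm this
  · intro b hb b' hb' heq
    simp only [Finset.coe_filter, Set.mem_setOf_eq] at hb hb'
    have hb1 : par k b = 1 := hb.2
    have hb1' : par k b' = 1 := hb'.2
    have hfb : f b = g b hb1 := dif_pos hb1
    have hfb' : f b' = g b' hb1' := dif_pos hb1'
    have hadj := hg1 b hb1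
    have hadj' := hg1 b' hb1'
    have hcol := hg2 b hb1
    have hcol' := hg2 b' hb1'
    rw [fv_eq cV cE hadj] at hcol
    rw [fv_eq cV cE hadj'] at hcol'
    rw [hfb, hfb'] at heq
    -- the two edges have the same color cV 0 and share the endpoint g b hb1
    by_contra hne
    have hedges : (⟨s(b, g b hb1), (SimpleGraph.mem_edgeSet _).2 hadj⟩ :
        (unitaryCayleyGraph n).edgeSet)
        ≠ ⟨s(b', g b' hb1'), (SimpleGraph.mem_edgeSet _).2 hadj'⟩ := by
      intro hcon
      have hsym : s(b, g b hb1) = s(b', g b' hb1') := Subtype.ext_iff.1 hcon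
      rw [← heq] at hsym
      exact hne (Sym2.congr_left.1 hsym)
    apply h2 _ _ hedges ⟨g b hb1, Sym2.mem_mk_right _ _, ?_⟩ (hcol.trans hcol'.symm)
    show g b hb1 ∈ s(b', g b' hb1')
    rw [heq]
    exact Sym2.mem_mk_right _ _

end Lower

end UCGaux

theorem totalChromaticNumber_unitaryCayleyGraph_two_pow (k : ℕ) (hk : 0 < k) :
    totalChromaticNumber (unitaryCayleyGraph (2 ^ k)) = Nat.totient (2 ^ k) + 2 ∧
    Nat.totient (2 ^ k) + 2 = 2 ^ (k - 1) + 2 := by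
  obtain ⟨k', rfl⟩ : ∃ k', k = k' + 1 := ⟨k - 1, by omega⟩
  have htot : Nat.totient (2 ^ (k' + 1)) = 2 ^ k' := by
    rw [Nat.totient_prime_pow Nat.prime_two (Nat.succ_pos k')]
    simp
  have hk1 : k' + 1 - 1 = k' := by omega
  refine ⟨?_, by rw [htot, hk1]⟩
  rw [htot]
  obtain ⟨cV, cE, hcol⟩ := UCGaux.exists_coloring (k := k')
  apply le_antisymm
  · exact Nat.sInf_le ⟨cV, cE, hcol⟩
  · unfold totalChromaticNumber
    refine le_csInf ⟨2 ^ k' + 2, ⟨cV, cE, hcol⟩⟩ ?_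
    rintro j ⟨cV', cE', hcol'⟩
    exact UCGaux.lower_bound cV' cE' hcol'
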